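/- Let k ≥ 0 and let q ∈ 𝒫_k. Then there exist P₁, P₂, P₃ ∈ 𝒫_{k−1} such that the row-wise divergence of M(P₁,P₂,P₃) equals the gradient of q, i.e. Σ_{j=1}^{3} ∂_{x_j}(x_j P_i) = ∂_{x_i} q for i = 1, 2, 3, and such that each row of the matrix q·I₃ − M(P₁,P₂,P₃) is the curl of a polynomial vector field with components in 𝒫_{k+1}. -/

import Mathlib

open MvPolynomial

noncomputable section

/-- Real polynomials in the three variables `x, y, z` (indexed `0, 1, 2`). -/
abbrev P3 := MvPolynomial (Fin 3) ℝ

/-- Membership in `𝒫_m`, the space of polynomials of total degree at most `m`,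
with the convention `𝒫_m = {0}` for `m < 0`. -/
def memP (m : ℤ) (p : P3) : Prop := p = 0 ∨ (p.totalDegree : ℤ) ≤ m

/-- The row-wise divergence of the matrix `M(P₁,P₂,P₃)` with entries `M i j = x_j * P i`:
its `i`-th component is `Σ_j ∂_{x_j} (x_j P_i)`. -/
def rowDiv (P : Fin 3 → P3) : Fin 3 → P3 := fun i => ∑ j : Fin 3, pderiv j (X j * P i)

/-- The curl of a polynomial vector field `(w₁, w₂, w₃)`. -/
def curl3 (w : Fin 3 → P3) : Fin 3 → P3 :=
  ![pderiv 1 (w 2) - pderiv 2 (w 1),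
    pderiv 2 (w 0) - pderiv 0 (w 2),
    pderiv 0 (w 1) - pderiv 1 (w 0)]

/-! ### Auxiliary machinery -/

/-- The degree of a monomial exponent. -/
def dOf (a : Fin 3 →₀ ℕ) : ℕ := a.sum fun _ n => n

lemma dOf_eq (a : Fin 3 →₀ ℕ) : dOf a = ∑ l : Fin 3, a l := by
  rw [dOf, Finsupp.sum_fintype]; intro; rfl

lemma X_mul_monomial' (l : Fin 3) (b : Fin 3 →₀ ℕ) (c : ℝ) :
    X l * monomial b c = monomial (b + Finsupp.single l 1) c := by
  rw [X, monomial_mul, one_mul, add_comm]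

/-- Euler's identity for monomials. -/
lemma eulerM (a : Fin 3 →₀ ℕ) (c : ℝ) :
    ∑ l : Fin 3, X l * pderiv l (monomial a c)
      = C ((dOf a : ℕ) : ℝ) * (monomial a c : P3) := by
  have h : ∀ l : Fin 3, X l * pderiv l (monomial a c)
      = C ((a l : ℕ) : ℝ) * (monomial a c : P3) := by
    intro l
    rw [pderiv_monomial]
    rcases Nat.eq_zero_or_pos (a l) with h0 | h0
    · simp [h0]
    · rw [X_mul_monomial', tsub_add_cancel_of_le (Finsupp.single_le_iff.2 h0),
        C_mul_monomial, mul_comm]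
  rw [Finset.sum_congr rfl fun l _ => h l, ← Finset.sum_mul, ← map_sum, dOf_eq]
  push_cast
  rfl

lemma degsub (a : Fin 3 →₀ ℕ) (i : Fin 3) (h : 0 < a i) :
    dOf (a - Finsupp.single i 1) + 1 = dOf a := by
  rw [dOf_eq, dOf_eq]
  have hc : ∀ l, ((a - Finsupp.single i 1 : Fin 3 →₀ ℕ)) l
      = a l - (Finsupp.single i 1 : Fin 3 →₀ ℕ) l := fun l => Finsupp.tsub_apply _ _ _
  have hs : ∀ l, (Finsupp.single i 1 : Fin 3 →₀ ℕ) l = if i = l then 1 else 0 := fun l =>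
    Finsupp.single_apply
  rw [Fin.sum_univ_three, Fin.sum_univ_three, hc, hc, hc, hs, hs, hs]
  fin_cases i <;> simp_all <;> omega

/-- Euler's identity for the derivative of a monomial. -/
lemma eulerPD (a : Fin 3 →₀ ℕ) (c : ℝ) (i : Fin 3) :
    ∑ l : Fin 3, X l * pderiv l (pderiv i (monomial a c))
      = C (((dOf a : ℕ) : ℝ) - 1) * pderiv i (monomial a c : P3) := by
  rw [pderiv_monomial]
  rcases Nat.eq_zero_or_pos (a i) with h0 | h0
  · simp [h0]
  · rw [eulerM]
    congr 2
    rw [← degsub a i h0]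
    push_cast
    ring

/-- A divergence-free homogeneous field is a curl. -/
lemma curl_formula (v : Fin 3 → P3) (e dr : ℝ) (he : (dr + 2) * e = 1)
    (heuler : ∀ j, ∑ l : Fin 3, X l * pderiv l (v j) = C dr * v j)
    (hdiv : ∑ j : Fin 3, pderiv j (v j) = 0) (j : Fin 3) :
    v j = curl3 (fun l => C e *
      (![X 2 * v 1 - X 1 * v 2, X 0 * v 2 - X 2 * v 0, X 1 * v 0 - X 0 * v 1] l)) j := by
  have hce : (C dr + 2) * C e = (1 : P3) := by
    rw [show ((2:P3)) = C (2:ℝ) from (map_ofNat C 2).symm, ← map_add, ← C_mul, he, C_1]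
  have h0 := heuler 0; have h1 := heuler 1; have h2 := heuler 2
  rw [Fin.sum_univ_three] at h0 h1 h2 hdiv
  have n01 : (0:Fin 3) ≠ 1 := by decide
  have n02 : (0:Fin 3) ≠ 2 := by decide
  have n10 : (1:Fin 3) ≠ 0 := by decide
  have n12 : (1:Fin 3) ≠ 2 := by decide
  have n20 : (2:Fin 3) ≠ 0 := by decide
  have n21 : (2:Fin 3) ≠ 1 := by decide
  have e0 : pderiv 1 (C e * (X 1 * v 0 - X 0 * v 1)) -
      pderiv 2 (C e * (X 0 * v 2 - X 2 * v 0)) = v 0 := by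
    simp only [pderiv_C_mul, map_sub, pderiv_mul, pderiv_X_self, one_mul,
      pderiv_X_of_ne n01, pderiv_X_of_ne n02, pderiv_X_of_ne n10, pderiv_X_of_ne n12,
      pderiv_X_of_ne n20, pderiv_X_of_ne n21, pderiv_C, zero_mul, mul_zero]
    linear_combination (C e) * h0 - (C e * X 0) * hdiv + v 0 * hce
  have e1 : pderiv 2 (C e * (X 2 * v 1 - X 1 * v 2)) -
      pderiv 0 (C e * (X 1 * v 0 - X 0 * v 1)) = v 1 := by
    simp only [pderiv_C_mul, map_sub, pderiv_mul, pderiv_X_self, one_mul,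
      pderiv_X_of_ne n01, pderiv_X_of_ne n02, pderiv_X_of_ne n10, pderiv_X_of_ne n12,
      pderiv_X_of_ne n20, pderiv_X_of_ne n21, pderiv_C, zero_mul, mul_zero]
    linear_combination (C e) * h1 - (C e * X 1) * hdiv + v 1 * hce
  have e2 : pderiv 0 (C e * (X 0 * v 2 - X 2 * v 0)) -
      pderiv 1 (C e * (X 2 * v 1 - X 1 * v 2)) = v 2 := by
    simp only [pderiv_C_mul, map_sub, pderiv_mul, pderiv_X_self, one_mul,
      pderiv_X_of_ne n01, pderiv_X_of_ne n02, pderiv_X_of_ne n10, pderiv_X_of_ne n12,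
      pderiv_X_of_ne n20, pderiv_X_of_ne n21, pderiv_C, zero_mul, mul_zero]
    linear_combination (C e) * h2 - (C e * X 2) * hdiv + v 2 * hce
  fin_cases j
  · exact e0.symm
  · exact e1.symm
  · exact e2.symm

/-- The conclusion of the main theorem, as a predicate. -/
def Good (k : ℕ) (q : P3) : Prop :=
  ∃ P : Fin 3 → P3, (∀ i, memP ((k : ℤ) - 1) (P i)) ∧
    (∀ i, rowDiv P i = pderiv i q) ∧
    (∀ i : Fin 3, ∃ w : Fin 3 → P3, (∀ l, memP ((k : ℤ) + 1) (w l)) ∧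
      ∀ j : Fin 3, (if i = j then q else 0) - X j * P i = curl3 w j)

lemma good_zero (k : ℕ) : Good k 0 := by
  refine ⟨fun _ => 0, fun i => Or.inl rfl, fun i => by simp [rowDiv], fun i => ⟨fun _ => 0,
    fun l => Or.inl rfl, fun j => ?_⟩⟩
  fin_cases j <;> fin_cases i <;> simp [curl3]

lemma memP_add {m : ℤ} {p r : P3} (hp : memP m p) (hr : memP m r) : memP m (p + r) := by
  rcases hp with hp | hp
  · simpa [hp] using hr
  rcases hr with hr | hr
  · rw [hr, add_zero]; exact Or.inr hp
  by_cases h : p + r = 0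
  · exact Or.inl h
  · refine Or.inr ?_
    have := totalDegree_add p r
    have h1 : ((p + r).totalDegree : ℤ) ≤ max (p.totalDegree : ℤ) (r.totalDegree : ℤ) := by
      exact_mod_cast Nat.cast_le.2 (le_trans this (le_of_eq rfl))
    omega

lemma good_add {k : ℕ} {q q' : P3} (h : Good k q) (h' : Good k q') : Good k (q + q') := by
  obtain ⟨P, hP1, hP2, hP3⟩ := h
  obtain ⟨P', hP'1, hP'2, hP'3⟩ := h'
  refine ⟨fun i => P i + P' i, fun i => memP_add (hP1 i) (hP'1 i), fun i => ?_, fun i => ?_⟩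
  · have := hP2 i; have := hP'2 i
    simp only [rowDiv, mul_add, map_add, Finset.sum_add_distrib] at *
    rw [‹∑ j : Fin 3, pderiv j (X j * P i) = pderiv i q›,
      ‹∑ j : Fin 3, pderiv j (X j * P' i) = pderiv i q'›]
  · obtain ⟨w, hw1, hw2⟩ := hP3 i
    obtain ⟨w', hw'1, hw'2⟩ := hP'3 i
    refine ⟨fun l => w l + w' l, fun l => memP_add (hw1 l) (hw'1 l), fun j => ?_⟩
    have hc : curl3 (fun l => w l + w' l) j = curl3 w j + curl3 w' j := by
      fin_cases j <;> simp [curl3] <;> ring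
    rw [hc, ← hw2 j, ← hw'2 j]
    split_ifs <;> ring

lemma good_monomial (k : ℕ) (a : Fin 3 →₀ ℕ) (c0 : ℝ) (hk : dOf a ≤ k) :
    Good k (monomial a c0) := by
  set d : ℕ := dOf a with hd
  set q : P3 := monomial a c0 with hq
  set e : ℝ := ((d : ℝ) + 2)⁻¹ with he'
  have he : ((d : ℝ) + 2) * e = 1 := mul_inv_cancel₀ (by positivity)
  set P : Fin 3 → P3 := fun i => C e * pderiv i q with hPdef
  have hED : ∀ i, ∑ l : Fin 3, X l * pderiv l (pderiv i q) = C ((d:ℝ) - 1) * pderiv i q :=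
    fun i => eulerPD a c0 i
  have hC1 : (C ((d:ℝ) - 1) + 1 : P3) = C ((d:ℝ)) := by
    rw [← C_1, ← map_add]; norm_num
  have hce3 : ((C ((d:ℝ) - 1) + 3) * C e : P3) = 1 := by
    rw [show ((3:P3)) = C (3:ℝ) from (map_ofNat C 3).symm, ← map_add,
      show ((d:ℝ) - 1 + 3) = (d:ℝ) + 2 by ring, ← C_mul, he, C_1]
  have hrow : ∀ i, rowDiv P i = pderiv i q := by
    intro i
    have hE := hED i; rw [Fin.sum_univ_three] at hE
    simp only [rowDiv, hPdef, pderiv_mul, pderiv_X_self, pderiv_C_mul, pderiv_C, one_mul,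
      zero_mul, mul_zero, Fin.sum_univ_three]
    linear_combination (C e) * hE + (pderiv i q) * hce3
  refine ⟨P, ?_, hrow, ?_⟩
  · -- degree bound on P
    intro i
    by_cases h0 : a i = 0
    · left; simp [hPdef, hq, pderiv_monomial, h0]
    · right
      have hb : (pderiv i q).totalDegree ≤ dOf (a - Finsupp.single i 1) := by
        rw [hq, pderiv_monomial]; exact totalDegree_monomial_le _ _
      have h1 : (P i).totalDegree ≤ dOf (a - Finsupp.single i 1) := by
        calc (P i).totalDegree ≤ (C e).totalDegree + (pderiv i q).totalDegree :=
              totalDegree_mul _ _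
          _ ≤ dOf (a - Finsupp.single i 1) := by rw [totalDegree_C]; simpa using hb
      have h2 := degsub a i (Nat.pos_of_ne_zero h0)
      omega
  · -- curl part
    intro i
    set v : Fin 3 → P3 := fun j => (if i = j then q else 0) - X j * P i with hv
    have hE0 := hED i
    rw [Fin.sum_univ_three] at hE0
    have hXP : ∀ j, ∑ l : Fin 3, X l * pderiv l (X j * P i) = C ((d:ℝ)) * (X j * P i) := by
      have k0 : ∑ l : Fin 3, X l * pderiv l (X 0 * P i) = C ((d:ℝ)) * (X 0 * P i) := by
        rw [Fin.sum_univ_three]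
        simp only [hPdef, pderiv_mul, pderiv_C_mul, pderiv_X_self, pderiv_C, one_mul,
          pderiv_X_of_ne (by decide : (0:Fin 3) ≠ 1), pderiv_X_of_ne (by decide : (0:Fin 3) ≠ 2),
          pderiv_X_of_ne (by decide : (1:Fin 3) ≠ 0), pderiv_X_of_ne (by decide : (1:Fin 3) ≠ 2),
          pderiv_X_of_ne (by decide : (2:Fin 3) ≠ 0), pderiv_X_of_ne (by decide : (2:Fin 3) ≠ 1),
          zero_mul, mul_zero]
        linear_combination (C e * X 0) * hE0 + (X 0 * (C e * pderiv i q)) * hC1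
      have k1 : ∑ l : Fin 3, X l * pderiv l (X 1 * P i) = C ((d:ℝ)) * (X 1 * P i) := by
        rw [Fin.sum_univ_three]
        simp only [hPdef, pderiv_mul, pderiv_C_mul, pderiv_X_self, pderiv_C, one_mul,
          pderiv_X_of_ne (by decide : (0:Fin 3) ≠ 1), pderiv_X_of_ne (by decide : (0:Fin 3) ≠ 2),
          pderiv_X_of_ne (by decide : (1:Fin 3) ≠ 0), pderiv_X_of_ne (by decide : (1:Fin 3) ≠ 2),
          pderiv_X_of_ne (by decide : (2:Fin 3) ≠ 0), pderiv_X_of_ne (by decide : (2:Fin 3) ≠ 1),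
          zero_mul, mul_zero]
        linear_combination (C e * X 1) * hE0 + (X 1 * (C e * pderiv i q)) * hC1
      have k2 : ∑ l : Fin 3, X l * pderiv l (X 2 * P i) = C ((d:ℝ)) * (X 2 * P i) := by
        rw [Fin.sum_univ_three]
        simp only [hPdef, pderiv_mul, pderiv_C_mul, pderiv_X_self, pderiv_C, one_mul,
          pderiv_X_of_ne (by decide : (0:Fin 3) ≠ 1), pderiv_X_of_ne (by decide : (0:Fin 3) ≠ 2),
          pderiv_X_of_ne (by decide : (1:Fin 3) ≠ 0), pderiv_X_of_ne (by decide : (1:Fin 3) ≠ 2),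
          pderiv_X_of_ne (by decide : (2:Fin 3) ≠ 0), pderiv_X_of_ne (by decide : (2:Fin 3) ≠ 1),
          zero_mul, mul_zero]
        linear_combination (C e * X 2) * hE0 + (X 2 * (C e * pderiv i q)) * hC1
      intro j
      fin_cases j
      · exact k0
      · exact k1
      · exact k2
    have heuler : ∀ j, ∑ l : Fin 3, X l * pderiv l (v j) = C ((d:ℝ)) * v j := by
      intro j
      have hsub : ∀ p r : P3,
          (∑ l : Fin 3, X l * pderiv l p = C ((d:ℝ)) * p) →
          (∑ l : Fin 3, X l * pderiv l r = C ((d:ℝ)) * r) →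
          ∑ l : Fin 3, X l * pderiv l (p - r) = C ((d:ℝ)) * (p - r) := by
        intro p r hp hr
        simp only [map_sub, mul_sub, Finset.sum_sub_distrib, hp, hr]
      refine hsub _ _ ?_ (hXP j)
      by_cases hij : i = j
      · simpa [hij, hq] using eulerM a c0
      · simp [hij]
    have hdiv : ∑ j : Fin 3, pderiv j (v j) = 0 := by
      have hr0 := hrow i
      simp only [rowDiv, Fin.sum_univ_three] at hr0
      rw [Fin.sum_univ_three]
      simp only [hv, map_sub]
      fin_cases i <;>
        simp only [show ∀ j : Fin 3, ∀ p : P3, pderiv j (if p = p then q else 0) = pderiv j q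
          from fun _ _ => by simp] <;>
        simp_all <;> linear_combination -hr0
    refine ⟨fun l => C e *
      (![X 2 * v 1 - X 1 * v 2, X 0 * v 2 - X 2 * v 0, X 1 * v 0 - X 0 * v 1] l), ?_, ?_⟩
    · -- degree bound on w
      have hvdeg : ∀ j, (v j).totalDegree ≤ d := by
        intro j
        have hiteq : (if i = j then q else 0).totalDegree ≤ d := by
          split_ifs
          · rw [hq]; exact totalDegree_monomial_le _ _
          · simp
        have hXPdeg : (X j * P i).totalDegree ≤ d := by
          by_cases h0 : a i = 0
          · have : P i = 0 := by simp [hPdef, hq, pderiv_monomial, h0]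
            simp [this]
          · have hb : (pderiv i q).totalDegree ≤ dOf (a - Finsupp.single i 1) := by
              rw [hq, pderiv_monomial]; exact totalDegree_monomial_le _ _
            have h2 := degsub a i (Nat.pos_of_ne_zero h0)
            calc (X j * P i).totalDegree ≤ (X j).totalDegree + (P i).totalDegree :=
                totalDegree_mul _ _
              _ ≤ 1 + ((C e).totalDegree + (pderiv i q).totalDegree) :=
                add_le_add (le_of_eq (totalDegree_X _)) (totalDegree_mul _ _)
              _ ≤ 1 + dOf (a - Finsupp.single i 1) := by rw [totalDegree_C]; simpa using hb
              _ ≤ d := by omega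
        have hsub := totalDegree_sub (if i = j then q else 0) (X j * P i)
        exact hsub.trans (max_le hiteq hXPdeg)
      intro l
      right
      dsimp only
      have hcomp : ∀ j1 j2 j3 j4 : Fin 3,
          (C e * (X j1 * v j2 - X j3 * v j4)).totalDegree ≤ d + 1 := by
        intro j1 j2 j3 j4
        have t1 : (C e * (X j1 * v j2 - X j3 * v j4)).totalDegree ≤
            (C e).totalDegree + (X j1 * v j2 - X j3 * v j4).totalDegree := totalDegree_mul _ _
        have t2 : (X j1 * v j2 - X j3 * v j4).totalDegree ≤
            max (X j1 * v j2).totalDegree (X j3 * v j4).totalDegree := totalDegree_sub _ _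
        have t3 : (X j1 * v j2).totalDegree ≤ (X j1).totalDegree + (v j2).totalDegree :=
          totalDegree_mul _ _
        have t4 : (X j3 * v j4).totalDegree ≤ (X j3).totalDegree + (v j4).totalDegree :=
          totalDegree_mul _ _
        have t5 := hvdeg j2
        have t6 := hvdeg j4
        have tX1 : (X j1 : P3).totalDegree = 1 := totalDegree_X _
        have tX3 : (X j3 : P3).totalDegree = 1 := totalDegree_X _
        have tC : (C e : P3).totalDegree = 0 := totalDegree_C _
        omega
      have : (C e * ((![X 2 * v 1 - X 1 * v 2, X 0 * v 2 - X 2 * v 0,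
          X 1 * v 0 - X 0 * v 1] : Fin 3 → P3) l)).totalDegree ≤ d + 1 := by
        fin_cases l <;> simpa using hcomp _ _ _ _
      omega
    · exact fun j => curl_formula v e ((d:ℝ)) he heuler hdiv j

/-- For `q ∈ 𝒫_k` there are `P₁, P₂, P₃ ∈ 𝒫_{k-1}` such that the row-wise divergence of
`M(P₁,P₂,P₃)` is `∇q` and every row of `q·I₃ - M(P₁,P₂,P₃)` is the curl of a polynomial
vector field with components in `𝒫_{k+1}` (i.e. `q·I₃ ∈ ℛ̄^k ⊕ (ℛ^k)³`). -/
theorem qId_mem_Rbk_plus_Rk (k : ℕ) (q : P3) (hq : memP (k : ℤ) q) :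
    ∃ P : Fin 3 → P3, (∀ i, memP ((k : ℤ) - 1) (P i)) ∧
      (∀ i, rowDiv P i = pderiv i q) ∧
      (∀ i : Fin 3, ∃ w : Fin 3 → P3, (∀ l, memP ((k : ℤ) + 1) (w l)) ∧
        ∀ j : Fin 3, (if i = j then q else 0) - X j * P i = curl3 w j) := by
  rcases hq with hq | hq
  · subst hq; exact good_zero k
  · have hdeg : q.totalDegree ≤ k := by exact_mod_cast hq
    have hgood : Good k (∑ a ∈ q.support, monomial a (coeff a q)) := by
      refine Finset.sum_induction _ (Good k) (fun _ _ h h' => good_add h h') (good_zero k) ?_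
      intro a ha
      refine good_monomial k a _ ?_
      exact le_trans (le_totalDegree ha) hdeg
    rwa [← as_sum q] at hgood
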